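/- arXiv:2206.13421 — 2 statements merged into one kernel-verified Lean document; each statement's English description precedes it below -/
import Mathlib

section
/- Let G be a finite group and let G⁰ = G ∪ {0} be the semigroup obtained by adjoining a zero element to G. Then G⁰ is equidivisible, and G⁰ (viewed as a profinite semigroup with the discrete topology) is a KR-cover if and only if G is trivial. -/
set_option autoImplicit false

/-! ### General notions: topological semigroups, pseudovarieties, pro-V semigroups -/

/-- Continuity of a map into a type regarded with the discrete topology. -/
def ContinuousDisc {S : Type} [TopologicalSpace S] {T : Type} (f : S → T) : Prop :=
  @Continuous S T _ ⊥ f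

/-- A pseudovariety of semigroups: a class of finite semigroups closed under
homomorphic images, subsemigroups and finite direct products. -/
structure Pseudovariety : Type 1 where
  Mem : ∀ (S : Type) [Semigroup S], Prop
  finite : ∀ (S : Type) [Semigroup S], Mem S → Finite S
  closed_hom : ∀ (S T : Type) [Semigroup S] [Semigroup T] (f : S →ₙ* T),
    Mem S → Function.Surjective f → Mem T
  closed_sub : ∀ (S T : Type) [Semigroup S] [Semigroup T] (f : T →ₙ* S),
    Mem S → Function.Injective f → Mem T
  closed_prod : ∀ (ι : Type) [Finite ι] (S : ι → Type) [∀ i, Semigroup (S i)],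
    (∀ i, Mem (S i)) → Mem (∀ i, S i)

/-- A bundled member of a pseudovariety `V` (a finite semigroup belonging to `V`),
always regarded as carrying the discrete topology. -/
structure SgrIn (V : Pseudovariety) : Type 1 where
  carrier : Type
  [str : Semigroup carrier]
  mem : V.Mem carrier

attribute [instance] SgrIn.str

/-- A (bundled) topological semigroup. -/
structure TopSgr : Type 1 where
  carrier : Type
  [str : Semigroup carrier]
  [top : TopologicalSpace carrier]

attribute [instance] TopSgr.str TopSgr.top

/-- A finite semigroup regarded as a topological semigroup with the discrete topology. -/
def discTopSgr (S : Type) [Semigroup S] : TopSgr :=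
  @TopSgr.mk S _ ⊥

/-- A pro-V semigroup: a compact Hausdorff topological semigroup that is residually `V`. -/
def IsProV (V : Pseudovariety) (S : TopSgr) : Prop :=
  CompactSpace S.carrier ∧ T2Space S.carrier ∧ ContinuousMul S.carrier ∧
    ∀ x y : S.carrier, x ≠ y → ∃ (F : SgrIn V) (f : S.carrier →ₙ* F.carrier),
      ContinuousDisc ⇑f ∧ f x ≠ f y

/-- A profinite semigroup: a compact Hausdorff totally disconnected topological semigroup. -/
def IsProfiniteSgr (S : TopSgr) : Prop :=
  CompactSpace S.carrier ∧ T2Space S.carrier ∧ TotallyDisconnectedSpace S.carrier ∧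
    ContinuousMul S.carrier

/-- `C`, together with the continuous homomorphisms `φ i`, is a `V`-coproduct of the
family `S` of pro-`V` semigroups. -/
structure IsCoproduct (V : Pseudovariety) {I : Type} (S : I → TopSgr)
    (C : TopSgr) (φ : ∀ i, (S i).carrier →ₙ* C.carrier) : Prop where
  proV : IsProV V C
  cont : ∀ i, Continuous ⇑(φ i)
  universal : ∀ (T : TopSgr), IsProV V T →
    ∀ ψ : ∀ i, (S i).carrier →ₙ* T.carrier, (∀ i, Continuous ⇑(ψ i)) →
      ∃! Ψ : C.carrier →ₙ* T.carrier, Continuous ⇑Ψ ∧ ∀ i, Ψ.comp (φ i) = ψ i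

/-- `P`, together with the homomorphisms `e i`, is a free product (coproduct in the
category of semigroups) of the family `S`. -/
structure IsFreeProduct {I : Type} (S : I → Type) [∀ i, Semigroup (S i)]
    (P : Type) [Semigroup P] (e : ∀ i, S i →ₙ* P) : Prop where
  universal : ∀ (T : Type) [Semigroup T] (f : ∀ i, S i →ₙ* T),
    ∃! F : P →ₙ* T, ∀ i, F.comp (e i) = f i

/-! ### Particular pseudovarieties and related notions -/

/-- `V` contains the pseudovariety `Sl` of finite semilattices. -/
def ContainsSl (V : Pseudovariety) : Prop :=
  ∀ (S : Type) [Semigroup S] [Finite S],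
    (∀ x y : S, x * y = y * x) → (∀ x : S, x * x = x) → V.Mem S

/-- Green's `J`-preorder: `s ≤_J t`, i.e. `s ∈ S^I t S^I`. -/
def JBelow {S : Type} [Semigroup S] (s t : S) : Prop :=
  ∃ x y : WithOne S, x * (t : WithOne S) * y = (s : WithOne S)

/-- `V` contains the pseudovariety `J` of finite `J`-trivial semigroups. -/
def ContainsJ (V : Pseudovariety) : Prop :=
  ∀ (S : Type) [Semigroup S] [Finite S],
    (∀ s t : S, JBelow s t → JBelow t s → s = t) → V.Mem S

/-- The preimage of an idempotent under a semigroup homomorphism, as a subsemigroup. -/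
def fiberSub {S T : Type} [Semigroup S] [Semigroup T] (ψ : S →ₙ* T) (e : T)
    (he : e * e = e) : Subsemigroup S where
  carrier := ⇑ψ ⁻¹' {e}
  mul_mem' := by
    intro a b ha hb
    simp only [Set.mem_preimage, Set.mem_singleton_iff] at *
    rw [map_mul, ha, hb, he]

/-- The set of products of `n+1` elements of a semigroup (so `nthProds S 0 = S`). -/
def nthProds (S : Type) [Semigroup S] : ℕ → Set S
  | 0 => Set.univ
  | n + 1 => {x | ∃ a y, y ∈ nthProds S n ∧ x = a * y}

/-- A nilpotent semigroup: it has a zero `z` and some power of the semigroup is `{z}`. -/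
def IsNilpotentSgr (S : Type) [Semigroup S] : Prop :=
  ∃ z : S, (∀ x : S, z * x = z ∧ x * z = z) ∧ ∃ n : ℕ, nthProds S n ⊆ {z}

/-- A generator of the Mal'cev product `N ⓜ V`: a finite semigroup admitting a surjective
homomorphism onto a member of `V` all of whose idempotent fibers are nilpotent. -/
def NMalcevGen (V : Pseudovariety) (S : Type) [Semigroup S] : Prop :=
  Finite S ∧ ∃ (T : SgrIn V) (ψ : S →ₙ* T.carrier), Function.Surjective ψ ∧
    ∀ (e : T.carrier) (he : e * e = e), IsNilpotentSgr (fiberSub ψ e he)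

/-- The equality `N ⓜ V = V`: `V` coincides with the smallest pseudovariety containing
all finite semigroups admitting an `N`-morphism onto some member of `V`. -/
def NMalcevFixed (V : Pseudovariety) : Prop :=
  ∀ (S : Type) [Semigroup S] [Finite S],
    V.Mem S ↔ ∀ U : Pseudovariety,
      (∀ (S' : Type) [Semigroup S'], NMalcevGen V S' → U.Mem S') → U.Mem S

/-- A completely simple semigroup: simple with a primitive idempotent. -/
def IsCompletelySimple (S : Type) [Semigroup S] : Prop :=
  (∀ J : Set S, J.Nonempty → (∀ s x : S, x ∈ J → s * x ∈ J ∧ x * s ∈ J) → J = Set.univ) ∧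
  ∃ e : S, e * e = e ∧ ∀ f : S, f * f = f → e * f = f → f * e = f → f = e

/-- An equidivisible semigroup. -/
def Equidivisible (S : Type) [Semigroup S] : Prop :=
  ∀ u v x y : S, u * v = x * y →
    ∃ t : WithOne S,
      ((x : WithOne S) = (u : WithOne S) * t ∧ t * (y : WithOne S) = (v : WithOne S)) ∨
      ((x : WithOne S) * t = (u : WithOne S) ∧ (y : WithOne S) = t * (v : WithOne S))

/-! ### The two-sided Karnofsky–Rhodes expansion -/

/-- Vertices of the two-sided Cayley graph of `T`: pairs of elements of `T^I`. -/
abbrev KRVtx (T : Type) : Type := WithOne T × WithOne T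

/-- Edges of the two-sided Cayley graph: (source, label, target). -/
abbrev KREdge (A T : Type) : Type := KRVtx T × A × KRVtx T

/-- The image in `T^I` of a letter. -/
def letterImg {A T : Type} [Semigroup T] (ψ : FreeSemigroup A →ₙ* T) (a : A) : WithOne T :=
  (ψ (FreeSemigroup.of a) : WithOne T)

/-- The image in `T^I` of a (possibly empty) word. -/
def wordImg {A T : Type} [Semigroup T] (ψ : FreeSemigroup A →ₙ* T) (w : List A) : WithOne T :=
  (w.map (letterImg ψ)).prod

/-- `e` is an edge of the two-sided Cayley graph `Γ_ψ`. -/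
def IsKREdge {A T : Type} [Semigroup T] (ψ : FreeSemigroup A →ₙ* T) (e : KREdge A T) : Prop :=
  e.1.1 * letterImg ψ e.2.1 = e.2.2.1 ∧ e.1.2 = letterImg ψ e.2.1 * e.2.2.2

/-- One step along an edge of `Γ_ψ` (used to define directed paths). -/
def KRStep {A T : Type} [Semigroup T] (ψ : FreeSemigroup A →ₙ* T) (v w : KRVtx T) : Prop :=
  ∃ a : A, v.1 * letterImg ψ a = w.1 ∧ v.2 = letterImg ψ a * w.2

/-- A transition edge of `Γ_ψ`: an edge from whose target there is no directed path
back to its source. -/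
def IsTransEdge {A T : Type} [Semigroup T] (ψ : FreeSemigroup A →ₙ* T) (e : KREdge A T) : Prop :=
  IsKREdge ψ e ∧ ¬ Relation.ReflTransGen (KRStep ψ) e.2.2 e.1

/-- The list of letters of an element of the free semigroup. -/
def letters {A : Type} (u : FreeSemigroup A) : List A := u.head :: u.tail

/-- The set of edges of the path `p_u` of `Γ_ψ` from `(I, ψ u)` to `(ψ u, I)` labeled by `u`. -/
def pathEdges {A T : Type} [Semigroup T] (ψ : FreeSemigroup A →ₙ* T) (u : FreeSemigroup A) :
    Set (KREdge A T) :=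
  {e | ∃ (w₁ w₂ : List A) (a : A), letters u = w₁ ++ a :: w₂ ∧
    e = ((wordImg ψ w₁, wordImg ψ (a :: w₂)), a, (wordImg ψ (w₁ ++ [a]), wordImg ψ w₂))}

/-- The set `T(p_u)` of transition edges of `Γ_ψ` occurring in the path `p_u`. -/
def transEdges {A T : Type} [Semigroup T] (ψ : FreeSemigroup A →ₙ* T) (u : FreeSemigroup A) :
    Set (KREdge A T) :=
  {e ∈ pathEdges ψ u | IsTransEdge ψ e}

/-- A realization of the two-sided Karnofsky–Rhodes expansion of `ψ : A⁺ → T`: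
a semigroup `K = T_ψ^KR` together with the projection `ψ^KR : A⁺ → K`, which is onto and
identifies `u` and `v` exactly when `ψ u = ψ v` and `T(p_u) = T(p_v)`, and the canonical
homomorphism `π : T_ψ^KR → T` with `π ∘ ψ^KR = ψ`. -/
structure KRExp {A T : Type} [Semigroup T] (ψ : FreeSemigroup A →ₙ* T) : Type 1 where
  K : Type
  [strK : Semigroup K]
  [finK : Finite K]
  ψKR : FreeSemigroup A →ₙ* K
  π : K →ₙ* T
  surj : Function.Surjective ⇑ψKR
  ker : ∀ u v : FreeSemigroup A, ψKR u = ψKR v ↔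
    (ψ u = ψ v ∧ transEdges ψ u = transEdges ψ v)
  proj : π.comp ψKR = ψ

attribute [instance] KRExp.strK KRExp.finK

/-- The data of a two-sided Karnofsky–Rhodes expansion of a finite semigroup `T`:
a finite alphabet `A`, an onto homomorphism `ψ : A⁺ → T`, and a realization `T_ψ^KR`. -/
structure KRData (T : Type) [Semigroup T] : Type 1 where
  A : Type
  [finA : Finite A]
  ψ : FreeSemigroup A →ₙ* T
  surjψ : Function.Surjective ⇑ψ
  E : KRExp ψ

attribute [instance] KRData.finA

/-- `V` is closed under two-sided Karnofsky–Rhodes expansion. -/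
def ClosedUnderKR (V : Pseudovariety) : Prop :=
  ∀ (A T : Type) [Finite A] [Semigroup T], V.Mem T →
    ∀ (ψ : FreeSemigroup A →ₙ* T), Function.Surjective ⇑ψ →
      ∀ E : KRExp ψ, V.Mem E.K

/-! ### KR-covers -/

/-- `S` is a KR-cover of the finite semigroup `T`. -/
def IsKRCoverOf (S : TopSgr) (T : Type) [Semigroup T] [Finite T] : Prop :=
  (∃ φ : S.carrier →ₙ* T, ContinuousDisc ⇑φ ∧ Function.Surjective ⇑φ) ∧
  ∀ φ : S.carrier →ₙ* T, ContinuousDisc ⇑φ → Function.Surjective ⇑φ →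
    ∃ (D : KRData T) (φψ : S.carrier →ₙ* D.E.K),
      ContinuousDisc ⇑φψ ∧ D.E.π.comp φψ = φ

/-- `S` is a KR-cover: a KR-cover of each of its finite continuous homomorphic images. -/
def IsKRCover (S : TopSgr) : Prop :=
  ∀ (T : Type) [Semigroup T] [Finite T],
    (∃ φ : S.carrier →ₙ* T, ContinuousDisc ⇑φ ∧ Function.Surjective ⇑φ) →
    IsKRCoverOf S T

/-- `S` is `V`-projective. -/
def IsVProjective (V : Pseudovariety) (S : TopSgr) : Prop :=
  IsProV V S ∧ ∀ (T R : TopSgr), IsProV V T → IsProV V R →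
    ∀ (f : S.carrier →ₙ* T.carrier) (g : R.carrier →ₙ* T.carrier),
      Continuous ⇑f → Continuous ⇑g → Function.Surjective ⇑g →
        ∃ f' : S.carrier →ₙ* R.carrier, Continuous ⇑f' ∧ g.comp f' = f

/-! ### Strong KR-covers and letter super-cancellativity -/

/-- `κ : A → S` is a generating mapping: its image generates a dense subsemigroup. -/
def GeneratingMap {A : Type} (S : TopSgr) (κ : A → S.carrier) : Prop :=
  Dense (Subsemigroup.closure (Set.range κ) : Set S.carrier)

/-- The homomorphism `A⁺ → T` extending `a ↦ φ (κ a)`. -/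
def liftGen {A : Type} (S : TopSgr) (κ : A → S.carrier) {T : Type} [Semigroup T]
    (φ : S.carrier →ₙ* T) : FreeSemigroup A →ₙ* T :=
  FreeSemigroup.lift (fun a => φ (κ a))

/-- `S` is a strong KR-cover of the finite semigroup `T` with respect to the
generating mapping `κ`. -/
def IsStrongKRCoverOfWrt {A : Type} (S : TopSgr) (κ : A → S.carrier)
    (T : Type) [Semigroup T] [Finite T] : Prop :=
  ∀ φ : S.carrier →ₙ* T, ContinuousDisc ⇑φ → Function.Surjective ⇑φ →
    ∃ (E : KRExp (liftGen S κ φ)) (φκ : S.carrier →ₙ* E.K),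
      ContinuousDisc ⇑φκ ∧ E.π.comp φκ = φ ∧
      ∀ a : A, φκ (κ a) = E.ψKR (FreeSemigroup.of a)

/-- `S` is a strong KR-cover of the finite semigroup `T` (with respect to some
generating mapping with finite domain). -/
def IsStrongKRCoverOf (S : TopSgr) (T : Type) [Semigroup T] [Finite T] : Prop :=
  ∃ A : Type, Finite A ∧ ∃ κ : A → S.carrier, GeneratingMap S κ ∧
    IsStrongKRCoverOfWrt S κ T

/-- `S` is a strong KR-cover: a strong KR-cover of each of its finite continuous
homomorphic images. -/
def IsStrongKRCover (S : TopSgr) : Prop :=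
  ∀ (T : Type) [Semigroup T] [Finite T],
    (∃ φ : S.carrier →ₙ* T, ContinuousDisc ⇑φ ∧ Function.Surjective ⇑φ) →
    IsStrongKRCoverOf S T

/-- `S` is letter super-cancellative with respect to the subset `A` of `S`. -/
def IsLSC (S : TopSgr) (A : Set S.carrier) : Prop :=
  ∀ a ∈ A, ∀ b ∈ A, ∀ u v : WithOne S.carrier,
    (u * (a : WithOne S.carrier) = v * (b : WithOne S.carrier) → a = b ∧ u = v) ∧
    ((a : WithOne S.carrier) * u = (b : WithOne S.carrier) * v → a = b ∧ u = v)

/-! ### `S^I` and inverse limits -/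

/-- The sum topology on `S^I = S ∪ {I}`: the point `I` is isolated and `S` keeps
its topology. -/
def withOneTopology (S : Type) [TopologicalSpace S] : TopologicalSpace (WithOne S) where
  IsOpen V := IsOpen ((fun s : S => (s : WithOne S)) ⁻¹' V)
  isOpen_univ := by simp
  isOpen_inter := by
    intro U V hU hV
    rw [Set.preimage_inter]
    exact hU.inter hV
  isOpen_sUnion := by
    intro s hs
    rw [Set.preimage_sUnion]
    exact isOpen_biUnion hs

/-- `S^I` as a topological semigroup (in fact a monoid): `S` with an isolated identity
adjoined. -/
def withOneTopSgr (S : TopSgr) : TopSgr :=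
  @TopSgr.mk (WithOne S.carrier) _ (withOneTopology S.carrier)

/-- The inverse limit of a family of topological semigroups, as a subsemigroup of
the product. -/
def invLimSub {I : Type} [Preorder I] (S : I → TopSgr)
    (f : ∀ i j, j ≤ i → ((S i).carrier →ₙ* (S j).carrier)) :
    Subsemigroup (∀ i, (S i).carrier) where
  carrier := {x | ∀ i j (h : j ≤ i), f i j h (x i) = x j}
  mul_mem' := by
    intro a b ha hb i j h
    simp only [Pi.mul_apply, map_mul, ha i j h, hb i j h]

/-- The inverse limit as a topological semigroup (with the topology induced from the
product topology). -/
def invLimTopSgr {I : Type} [Preorder I] (S : I → TopSgr)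
    (f : ∀ i j, j ≤ i → ((S i).carrier →ₙ* (S j).carrier)) : TopSgr :=
  TopSgr.mk (invLimSub S f)


/-! ### Auxiliary development -/

section KRAux
variable {A T : Type} [Semigroup T] (ψ : FreeSemigroup A →ₙ* T)

theorem letters_mul (u v : FreeSemigroup A) :
    letters (u * v) = letters u ++ letters v := by
  show (u*v).head :: (u*v).tail = (u.head :: u.tail) ++ (v.head :: v.tail)
  rfl

theorem wordImg_append (l₁ l₂ : List A) :
    wordImg ψ (l₁ ++ l₂) = wordImg ψ l₁ * wordImg ψ l₂ := by
  simp [wordImg, List.map_append]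

theorem wordImg_cons (a : A) (l : List A) :
    wordImg ψ (a :: l) = letterImg ψ a * wordImg ψ l := by
  simp [wordImg]

theorem wordImg_letters (u : FreeSemigroup A) :
    wordImg ψ (letters u) = (ψ u : WithOne T) := by
  induction u using FreeSemigroup.recOnMul with
  | ih1 a => simp [letters, wordImg, letterImg, FreeSemigroup.of]
  | ih2 x y hx hy =>
      rw [letters_mul, wordImg_append, hx, hy, map_mul, WithOne.coe_mul]

/-- right/left modifications of edges -/
def rightExt (x : WithOne T) (e : KREdge A T) : KREdge A T :=
  ((e.1.1, e.1.2 * x), e.2.1, (e.2.2.1, e.2.2.2 * x))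

def leftExt (y : WithOne T) (e : KREdge A T) : KREdge A T :=
  ((y * e.1.1, e.1.2), e.2.1, (y * e.2.2.1, e.2.2.2))

theorem pathEdges_isKREdge {u : FreeSemigroup A} {e : KREdge A T}
    (h : e ∈ pathEdges ψ u) : IsKREdge ψ e := by
  obtain ⟨w₁, w₂, a, -, rfl⟩ := h
  constructor
  · simp [wordImg_append, wordImg_cons, wordImg]
  · simp [wordImg_cons]

theorem reach_rightExt {x : WithOne T} {v w : KRVtx T}
    (h : Relation.ReflTransGen (KRStep ψ) v w) :
    Relation.ReflTransGen (KRStep ψ) (v.1, v.2 * x) (w.1, w.2 * x) := by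
  refine Relation.ReflTransGen.lift (fun p : KRVtx T => (p.1, p.2 * x)) ?_ _ _ h
  rintro p q ⟨a, h1, h2⟩
  exact ⟨a, h1, show p.2 * x = letterImg ψ a * (q.2 * x) by rw [h2, mul_assoc]⟩

theorem reach_leftExt {y : WithOne T} {v w : KRVtx T}
    (h : Relation.ReflTransGen (KRStep ψ) v w) :
    Relation.ReflTransGen (KRStep ψ) (y * v.1, v.2) (y * w.1, w.2) := by
  refine Relation.ReflTransGen.lift (fun p : KRVtx T => (y * p.1, p.2)) ?_ _ _ h
  rintro p q ⟨a, h1, h2⟩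
  exact ⟨a, show y * p.1 * letterImg ψ a = y * q.1 by rw [← h1, mul_assoc], h2⟩

theorem pathEdges_mul (u v : FreeSemigroup A) :
    pathEdges ψ (u * v) =
      rightExt (ψ v : WithOne T) '' pathEdges ψ u ∪
      leftExt (ψ u : WithOne T) '' pathEdges ψ v := by
  ext e
  constructor
  · rintro ⟨w₁, w₂, a, hsplit, rfl⟩
    rw [letters_mul] at hsplit
    rcases List.append_eq_append_iff.1 hsplit.symm with ⟨a', ha1, ha2⟩ | ⟨c', hc1, hc2⟩
    · -- letters u = w₁ ++ a', a :: w₂ = a' ++ letters v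
      cases a' with
      | nil =>
          -- w₁ = letters u, letters v = a :: w₂
          refine Or.inr ⟨((wordImg ψ [], wordImg ψ (a :: w₂)), a,
            (wordImg ψ [a], wordImg ψ w₂)), ⟨[], w₂, a, by simpa using ha2.symm, rfl⟩, ?_⟩
          simp only [List.append_nil] at ha1
          simp [leftExt, ← wordImg_letters, ha1, wordImg_append, wordImg]
      | cons b rest =>
          obtain ⟨rfl, rfl⟩ : a = b ∧ w₂ = rest ++ letters v := by
            simpa using ha2
          refine Or.inl ⟨((wordImg ψ w₁, wordImg ψ (a :: rest)), a,
            (wordImg ψ (w₁ ++ [a]), wordImg ψ rest)), ⟨w₁, rest, a, ha1, rfl⟩, ?_⟩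
          simp [rightExt, wordImg_cons, wordImg_append, wordImg_letters, mul_assoc]
    · -- w₁ = letters u ++ c', letters v = c' ++ a :: w₂
      refine Or.inr ⟨((wordImg ψ c', wordImg ψ (a :: w₂)), a,
        (wordImg ψ (c' ++ [a]), wordImg ψ w₂)), ⟨c', w₂, a, hc2, rfl⟩, ?_⟩
      simp [leftExt, hc1, wordImg_append, wordImg_letters, mul_assoc]
  · rintro (⟨e', ⟨w₁, w₂, a, hsplit, rfl⟩, rfl⟩ | ⟨e', ⟨w₁, w₂, a, hsplit, rfl⟩, rfl⟩)
    · refine ⟨w₁, w₂ ++ letters v, a, ?_, ?_⟩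
      · rw [letters_mul, hsplit]; simp
      · simp [rightExt, wordImg_cons, wordImg_append, wordImg_letters, mul_assoc]
    · refine ⟨letters u ++ w₁, w₂, a, ?_, ?_⟩
      · rw [letters_mul, hsplit]; simp
      · simp [leftExt, wordImg_cons, wordImg_append, wordImg_letters, mul_assoc]
end KRAux

section KRAux2
variable {A T : Type} [Semigroup T] (ψ : FreeSemigroup A →ₙ* T)

theorem transEdge_of_rightExt {u : FreeSemigroup A} {e : KREdge A T} (he : e ∈ pathEdges ψ u)
    {x : WithOne T} (ht : IsTransEdge ψ (rightExt x e)) : IsTransEdge ψ e := by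
  refine ⟨pathEdges_isKREdge ψ he, fun hreach => ht.2 ?_⟩
  exact reach_rightExt ψ hreach

theorem transEdge_of_leftExt {u : FreeSemigroup A} {e : KREdge A T} (he : e ∈ pathEdges ψ u)
    {y : WithOne T} (ht : IsTransEdge ψ (leftExt y e)) : IsTransEdge ψ e := by
  refine ⟨pathEdges_isKREdge ψ he, fun hreach => ht.2 ?_⟩
  exact reach_leftExt ψ hreach

theorem transEdges_mul (u v : FreeSemigroup A) :
    transEdges ψ (u * v) =
      {f | f ∈ rightExt (ψ v : WithOne T) '' transEdges ψ u ∧ IsTransEdge ψ f} ∪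
      {f | f ∈ leftExt (ψ u : WithOne T) '' transEdges ψ v ∧ IsTransEdge ψ f} := by
  ext f
  constructor
  · rintro ⟨hf, htf⟩
    rw [pathEdges_mul] at hf
    rcases hf with ⟨e, he, rfl⟩ | ⟨e, he, rfl⟩
    · exact Or.inl ⟨⟨e, ⟨he, transEdge_of_rightExt ψ he htf⟩, rfl⟩, htf⟩
    · exact Or.inr ⟨⟨e, ⟨he, transEdge_of_leftExt ψ he htf⟩, rfl⟩, htf⟩
  · rintro (⟨⟨e, ⟨he, -⟩, rfl⟩, htf⟩ | ⟨⟨e, ⟨he, -⟩, rfl⟩, htf⟩)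
    · exact ⟨by rw [pathEdges_mul]; exact Or.inl ⟨e, he, rfl⟩, htf⟩
    · exact ⟨by rw [pathEdges_mul]; exact Or.inr ⟨e, he, rfl⟩, htf⟩

/-- The Karnofsky–Rhodes congruence. -/
def krCon : Con (FreeSemigroup A) where
  r u v := ψ u = ψ v ∧ transEdges ψ u = transEdges ψ v
  iseqv := ⟨fun _ => ⟨rfl, rfl⟩, fun h => ⟨h.1.symm, h.2.symm⟩,
    fun h h' => ⟨h.1.trans h'.1, h.2.trans h'.2⟩⟩
  mul' := by
    rintro w x y z ⟨h1, h2⟩ ⟨h3, h4⟩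
    refine ⟨by rw [map_mul, map_mul, h1, h3], ?_⟩
    rw [transEdges_mul, transEdges_mul, h1, h2, h3, h4]

noncomputable def genericKRExp [Finite A] [Finite T] : KRExp ψ where
  K := (krCon ψ).Quotient
  ψKR := ⟨fun u => (u : (krCon ψ).Quotient), fun u v => Con.coe_mul u v⟩
  π := ⟨Quotient.lift (fun u => ψ u) (fun u v h => h.1), by
    rintro ⟨u⟩ ⟨v⟩; exact map_mul ψ u v⟩
  surj := by rintro ⟨u⟩; exact ⟨u, rfl⟩
  ker := fun u v => (krCon ψ).eq
  proj := rfl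
  finK := by
    have : Function.Injective
        (Quotient.lift (fun u => (ψ u, transEdges ψ u) : FreeSemigroup A → T × Set (KREdge A T))
          (fun u v h => Prod.ext h.1 h.2) : (krCon ψ).Quotient → T × Set (KREdge A T)) := by
      rintro ⟨u⟩ ⟨v⟩ h
      exact ((krCon ψ).eq).2 ⟨congrArg Prod.fst h, congrArg Prod.snd h⟩
    have : Finite (WithOne T) :=
      Finite.of_equiv (T ⊕ PUnit.{1}) (Equiv.optionEquivSumPUnit T).symm
    have : Finite (T × Set (KREdge A T)) := by infer_instance
    exact Finite.of_injective _ ‹Function.Injective _›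

end KRAux2

section IdemAux

instance finiteOption (T : Type) [Finite T] : Finite (Option T) :=
  Finite.of_equiv (T ⊕ PUnit.{1}) (Equiv.optionEquivSumPUnit T).symm

instance finiteWithOne (T : Type) [Finite T] : Finite (WithOne T) := finiteOption T
instance finiteWithZero (T : Type) [Finite T] : Finite (WithZero T) := finiteOption T

theorem exists_idem_pow {M : Type} [Monoid M] [Finite M] (u : M) :
    ∃ n : ℕ, 0 < n ∧ u ^ n * u ^ n = u ^ n := by
  obtain ⟨a, b, hne, heq⟩ := Finite.exists_ne_map_eq_of_infinite (fun n : ℕ => u ^ n)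
  wlog hab : a < b generalizing a b
  · exact this b a hne.symm heq.symm (by omega)
  set d := b - a with hd
  have hd0 : 0 < d := by omega
  have key : ∀ m : ℕ, u ^ (a + m) = u ^ (a + d + m) := by
    intro m
    have hb : a + d = b := by omega
    rw [pow_add, pow_add, hb, heq]
  have key2 : ∀ j m : ℕ, u ^ (a + m) = u ^ (a + m + j * d) := by
    intro j
    induction j with
    | zero => simp
    | succ j ih =>
        intro m
        have h1 : a + m + (j + 1) * d = a + d + (m + j * d) := by ring
        rw [h1, ← key (m + j * d), ← add_assoc, ih]
  refine ⟨(a + 1) * d, by positivity, ?_⟩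
  have hle : a + 1 ≤ (a + 1) * d := Nat.le_mul_of_pos_right _ hd0
  rw [← pow_add]
  have h2 : (a + 1) * d + (a + 1) * d = a + ((a + 1) * d - a) + (a + 1) * d := by omega
  have h3 : (a + 1) * d = a + ((a + 1) * d - a) := by omega
  rw [h2, ← key2 (a + 1) ((a + 1) * d - a), ← h3]

theorem coe_pow_exists {K : Type} [Semigroup K] (x : K) :
    ∀ n : ℕ, 0 < n → ∃ y : K, ((x : WithOne K)) ^ n = (y : WithOne K) := by
  intro n hn
  induction n with
  | zero => omega
  | succ n ih =>
      rcases Nat.eq_zero_or_pos n with rfl | hn'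
      · exact ⟨x, by simp⟩
      · obtain ⟨y, hy⟩ := ih hn'
        exact ⟨y * x, by rw [pow_succ, hy, WithOne.coe_mul]⟩

theorem absorb_left {M : Type} [Monoid M] {a c : M} (h : a * c = c) :
    ∀ n : ℕ, 0 < n → a * c ^ n = c ^ n := by
  intro n hn
  induction n with
  | zero => omega
  | succ n ih =>
      rcases Nat.eq_zero_or_pos n with rfl | hn'
      · simpa using h
      · rw [pow_succ, ← mul_assoc, ih hn']

theorem absorb_right {M : Type} [Monoid M] {a c : M} (h : c * a = c) :
    ∀ n : ℕ, 0 < n → c ^ n * a = c ^ n := by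
  intro n hn
  induction n with
  | zero => omega
  | succ n ih =>
      rcases Nat.eq_zero_or_pos n with rfl | hn'
      · simpa using h
      · rw [pow_succ, mul_assoc, h]

theorem idem_pow_eq {M : Type} [Monoid M] {v : M} (h : v * v = v) :
    ∀ n : ℕ, 0 < n → v ^ n = v := by
  intro n hn
  induction n with
  | zero => omega
  | succ n ih =>
      rcases Nat.eq_zero_or_pos n with rfl | hn'
      · simp
      · rw [pow_succ, ih hn', h]

end IdemAux

section ZeroAux
variable {A G : Type} [Group G] (ψ : FreeSemigroup A →ₙ* WithZero G)

theorem coe_zero_mul (X : WithOne (WithZero G)) :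
    WithOne.coe (0 : WithZero G) * X = WithOne.coe (0 : WithZero G) := by
  induction X using WithOne.recOneCoe with
  | one => exact mul_one _
  | coe t => rw [← WithOne.coe_mul, zero_mul]

theorem mul_coe_zero (X : WithOne (WithZero G)) :
    X * WithOne.coe (0 : WithZero G) = WithOne.coe (0 : WithZero G) := by
  induction X using WithOne.recOneCoe with
  | one => exact one_mul _
  | coe t => rw [← WithOne.coe_mul, mul_zero]

theorem reach_zero_fst {v w : KRVtx (WithZero G)}
    (h : Relation.ReflTransGen (KRStep ψ) v w)
    (h0 : v.1 = WithOne.coe (0 : WithZero G)) :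
    w.1 = WithOne.coe (0 : WithZero G) := by
  induction h with
  | refl => exact h0
  | tail _ hstep ih =>
      obtain ⟨a, h1, _⟩ := hstep
      rw [← h1, ih, letterImg, coe_zero_mul]

theorem wordImg_all_ne_zero {l : List A} (h : ∀ x ∈ l, ψ (FreeSemigroup.of x) ≠ 0) :
    wordImg ψ l = 1 ∨ ∃ t : WithZero G, t ≠ 0 ∧ wordImg ψ l = WithOne.coe t := by
  induction l with
  | nil => left; rfl
  | cons a l ih =>
      rw [wordImg_cons]
      rcases ih (fun x hx => h x (List.mem_cons_of_mem a hx)) with h1 | ⟨t, ht, h1⟩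
      · rw [h1, mul_one]
        exact Or.inr ⟨_, h a (List.mem_cons_self), rfl⟩
      · rw [h1, letterImg, ← WithOne.coe_mul]
        exact Or.inr ⟨_, mul_ne_zero (h a (List.mem_cons_self)) ht, rfl⟩

theorem zero_letter_wordImg {l : List A} {x : A} (hx : x ∈ l)
    (h0 : ψ (FreeSemigroup.of x) = 0) :
    wordImg ψ l = WithOne.coe (0 : WithZero G) := by
  induction l with
  | nil => cases hx
  | cons a l ih =>
      rw [wordImg_cons]
      rcases List.mem_cons.1 hx with rfl | hx'
      · rw [letterImg, h0]
        exact coe_zero_mul _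
      · rw [ih hx', mul_coe_zero]

theorem decomp_zero (l : List A) :
    (∀ x ∈ l, ψ (FreeSemigroup.of x) ≠ 0) ∨
    ∃ p x q, l = p ++ x :: q ∧ (∀ b ∈ p, ψ (FreeSemigroup.of b) ≠ 0) ∧
      ψ (FreeSemigroup.of x) = 0 := by
  induction l with
  | nil => left; simp
  | cons a l ih =>
      by_cases ha : ψ (FreeSemigroup.of a) = 0
      · exact Or.inr ⟨[], a, l, rfl, by simp, ha⟩
      · rcases ih with h | ⟨p, x, q, rfl, hp, hx⟩
        · left
          intro x hx
          rcases List.mem_cons.1 hx with rfl | hx'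
          · exact ha
          · exact h x hx'
        · refine Or.inr ⟨a :: p, x, q, rfl, ?_, hx⟩
          intro b hb
          rcases List.mem_cons.1 hb with rfl | hb'
          · exact ha
          · exact hp b hb'

theorem prefix_unique {q w₂ : List A} {x y : A}
    (hx : ψ (FreeSemigroup.of x) = 0) (hy : ψ (FreeSemigroup.of y) = 0) :
    ∀ (p w₁ : List A), p ++ x :: q = w₁ ++ y :: w₂ →
      (∀ b ∈ p, ψ (FreeSemigroup.of b) ≠ 0) →
      (∀ b ∈ w₁, ψ (FreeSemigroup.of b) ≠ 0) → p = w₁ := by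
  intro p
  induction p with
  | nil =>
      intro w₁ h hp hw
      cases w₁ with
      | nil => rfl
      | cons c w₁' =>
          simp only [List.nil_append, List.cons_append, List.cons.injEq] at h
          exact absurd (h.1 ▸ hx) (hw c (List.mem_cons_self))
  | cons c p' ih =>
      intro w₁ h hp hw
      cases w₁ with
      | nil =>
          simp only [List.cons_append, List.nil_append, List.cons.injEq] at h
          exact absurd (h.1 ▸ hy) (fun h' => (hp c (List.mem_cons_self)) h')
      | cons c' w₁' =>
          simp only [List.cons_append, List.cons.injEq] at h
          rw [h.1, ih w₁' h.2 (fun b hb => hp b (List.mem_cons_of_mem c hb))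
            (fun b hb => hw b (List.mem_cons_of_mem c' hb))]

end ZeroAux

theorem equidiv_withZero (G : Type) [Group G] : Equidivisible (WithZero G) := by
  intro u v x y huv
  by_cases hx : x = 0
  · by_cases hv : v = 0
    · refine ⟨WithOne.coe (0 : WithZero G), Or.inl ⟨?_, ?_⟩⟩
      · rw [← WithOne.coe_mul, mul_zero, hx]
      · rw [← WithOne.coe_mul, zero_mul, hv]
    · have hu : u = 0 := by
        rcases mul_eq_zero.1 (huv.trans (by rw [hx, zero_mul])) with h | h
        · exact h
        · exact absurd h hv
      refine ⟨WithOne.coe (y * v⁻¹ : WithZero G), Or.inr ⟨?_, ?_⟩⟩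
      · rw [← WithOne.coe_mul, hx, zero_mul, hu]
      · rw [← WithOne.coe_mul, inv_mul_cancel_right₀ hv]
  · refine ⟨WithOne.coe (x⁻¹ * u : WithZero G), Or.inr ⟨?_, ?_⟩⟩
    · rw [← WithOne.coe_mul, mul_inv_cancel_left₀ hx]
    · rw [← WithOne.coe_mul, mul_assoc, huv, inv_mul_cancel_left₀ hx]

theorem krcover_of_trivial (G : Type) [Group G] [Finite G] (htriv : ∀ g : G, g = 1) :
    IsKRCover (discTopSgr (WithZero G)) := by
  intro T _ _ hex
  refine ⟨hex, ?_⟩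
  intro φ hφc hφs
  let ψ : FreeSemigroup (WithZero G) →ₙ* T := FreeSemigroup.lift (fun s => φ s)
  have hψof : ∀ s : WithZero G, ψ (FreeSemigroup.of s) = φ s :=
    fun s => FreeSemigroup.lift_of _ s
  have hψs : Function.Surjective ⇑ψ := by
    intro t
    obtain ⟨s, hs⟩ := hφs t
    exact ⟨FreeSemigroup.of s, (hψof s).trans hs⟩
  let E := genericKRExp ψ
  have hπψ : ∀ w, E.π (E.ψKR w) = ψ w := fun w => DFunLike.congr_fun E.proj w
  set x := E.ψKR (FreeSemigroup.of (1 : WithZero G)) with hxdef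
  set yy := E.ψKR (FreeSemigroup.of (0 : WithZero G)) with hyydef
  have hπx : E.π x = φ (1 : WithZero G) := by rw [hxdef, hπψ, hψof]
  have hπyy : E.π yy = φ (0 : WithZero G) := by rw [hyydef, hπψ, hψof]
  obtain ⟨n, hn, hidn⟩ := exists_idem_pow (WithOne.coe x)
  obtain ⟨f, hfd⟩ := coe_pow_exists x n hn
  have hff : f * f = f := WithOne.coe_inj.1 (by rw [WithOne.coe_mul, ← hfd, hidn, hfd])
  set c := f * yy * f with hcdef
  have hfc : WithOne.coe f * WithOne.coe c = WithOne.coe c := by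
    rw [← WithOne.coe_mul, hcdef, ← mul_assoc, ← mul_assoc, hff]
  have hcf : WithOne.coe c * WithOne.coe f = WithOne.coe c := by
    rw [← WithOne.coe_mul, hcdef, mul_assoc, mul_assoc, hff, ← mul_assoc]
  obtain ⟨m, hm, hidm⟩ := exists_idem_pow (WithOne.coe c)
  obtain ⟨o, hod⟩ := coe_pow_exists c m hm
  have hoo : o * o = o := WithOne.coe_inj.1 (by rw [WithOne.coe_mul, ← hod, hidm, hod])
  have hfo : f * o = o := WithOne.coe_inj.1
    (by rw [WithOne.coe_mul, ← hod, absorb_left hfc m hm])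
  have hof : o * f = o := WithOne.coe_inj.1
    (by rw [WithOne.coe_mul, ← hod, absorb_right hcf m hm])
  have hπf : E.π f = φ (1 : WithZero G) := by
    have hPP : WithOne.coe (E.π f) = WithOne.mapMulHom E.π (WithOne.coe f) :=
      (WithOne.mapMulHom_coe E.π f).symm
    rw [← hfd, map_pow, WithOne.mapMulHom_coe, hπx] at hPP
    have hone : φ (1 : WithZero G) * φ (1 : WithZero G) = φ (1 : WithZero G) := by
      exact (map_mul φ (1 : WithZero G) (1 : WithZero G)).symm.trans (congrArg φ (one_mul (1 : WithZero G)))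
    have : (WithOne.coe (φ (1 : WithZero G))) ^ n = WithOne.coe (φ (1 : WithZero G)) :=
      idem_pow_eq (by rw [← WithOne.coe_mul, hone]) n hn
    exact WithOne.coe_inj.1 (hPP.trans this)
  have hπc : E.π c = φ (0 : WithZero G) := by
    have h010 : ((1 : WithZero G) * 0 * 1 : WithZero G) = 0 := by
      rw [one_mul, mul_one]
    rw [hcdef, map_mul, map_mul, hπf, hπyy]
    exact ((congrArg (· * φ (1 : WithZero G)) (map_mul φ (1 : WithZero G) (0 : WithZero G)).symm).trans
      (map_mul φ ((1 : WithZero G) * 0) (1 : WithZero G)).symm).trans (congrArg φ h010)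
  have hπo : E.π o = φ (0 : WithZero G) := by
    have hPP : WithOne.coe (E.π o) = WithOne.mapMulHom E.π (WithOne.coe o) :=
      (WithOne.mapMulHom_coe E.π o).symm
    rw [← hod, map_pow, WithOne.mapMulHom_coe, hπc] at hPP
    have hzz : φ (0 : WithZero G) * φ (0 : WithZero G) = φ (0 : WithZero G) := by
      exact (map_mul φ (0 : WithZero G) (0 : WithZero G)).symm.trans (congrArg φ (mul_zero (0 : WithZero G)))
    have : (WithOne.coe (φ (0 : WithZero G))) ^ m = WithOne.coe (φ (0 : WithZero G)) :=
      idem_pow_eq (by rw [← WithOne.coe_mul, hzz]) m hm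
    exact WithOne.coe_inj.1 (hPP.trans this)
  let σ : WithZero G →ₙ* E.K :=
    { toFun := fun s => WithZero.recZeroCoe o (fun _ => f) s
      map_mul' := by
        intro s t
        induction s using WithZero.recZeroCoe with
        | zero =>
            rw [zero_mul]
            induction t using WithZero.recZeroCoe with
            | zero =>
                simp only [WithZero.recZeroCoe_zero]
                exact hoo.symm
            | coe h =>
                simp only [WithZero.recZeroCoe_zero, WithZero.recZeroCoe_coe]
                exact hof.symm
        | coe g =>
            induction t using WithZero.recZeroCoe with
            | zero =>
                rw [mul_zero]
                simp only [WithZero.recZeroCoe_zero, WithZero.recZeroCoe_coe]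
                exact hfo.symm
            | coe h =>
                rw [← WithZero.coe_mul]
                simp only [WithZero.recZeroCoe_coe]
                exact hff.symm }
  refine ⟨⟨WithZero G, ψ, hψs, E⟩, σ, continuous_bot, ?_⟩
  apply MulHom.ext
  show ∀ s : WithZero G, E.π (σ s) = φ s
  intro s
  induction s using WithZero.recZeroCoe with
  | zero =>
      have h1 : σ (0 : WithZero G) = o := by
        show WithZero.recZeroCoe (motive := fun _ => E.K) o (fun _ => f) (0 : WithZero G) = o
        exact WithZero.recZeroCoe_zero _ _
      show E.π (σ (0 : WithZero G)) = φ (0 : WithZero G)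
      rw [h1, hπo]
  | coe g =>
      have h1 : σ ((g : G) : WithZero G) = f := by
        show WithZero.recZeroCoe (motive := fun _ => E.K) o (fun _ => f) ((g : G) : WithZero G) = f
        exact WithZero.recZeroCoe_coe _ _ _
      show E.π (σ ((g : G) : WithZero G)) = φ ((g : G) : WithZero G)
      rw [h1, hπf, htriv g, WithZero.coe_one]

theorem trivial_of_krcover (G : Type) [Group G] [Finite G]
    (h : IsKRCover (discTopSgr (WithZero G))) : ∀ g : G, g = 1 := by
  intro g
  obtain ⟨-, H⟩ := h (WithZero G) ⟨MulHom.id _, continuous_bot, Function.surjective_id⟩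
  obtain ⟨D, σ, -, hπσ⟩ := H (MulHom.id _) continuous_bot Function.surjective_id
  have hπσ' : ∀ s : WithZero G, D.E.π (σ s) = s := fun s => DFunLike.congr_fun hπσ s
  have hπψ : ∀ w, D.E.π (D.E.ψKR w) = D.ψ w := fun w => DFunLike.congr_fun D.E.proj w
  obtain ⟨u, hu⟩ := D.E.surj (σ ((g : G) : WithZero G))
  obtain ⟨z₀, hz₀⟩ := D.E.surj (σ (0 : WithZero G))
  have hψu : D.ψ u = ((g : G) : WithZero G) := by rw [← hπψ, hu, hπσ']
  have hg0 : (((g : G) : WithZero G) * 0 : WithZero G) = 0 := mul_zero _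
  have hKz : D.E.ψKR (u * z₀) = σ (0 : WithZero G) := by
    rw [map_mul, hu, hz₀]
    exact (map_mul σ ((g : G) : WithZero G) (0 : WithZero G)).symm.trans (congrArg σ hg0)
  have hKuz : D.E.ψKR (u * (u * z₀)) = D.E.ψKR (u * z₀) := by
    rw [map_mul (f := D.E.ψKR) u (u * z₀), hu, hKz]
    exact (map_mul σ ((g : G) : WithZero G) (0 : WithZero G)).symm.trans (congrArg σ hg0)
  set z := u * z₀ with hzdef
  have hTE : transEdges D.ψ (u * z) = transEdges D.ψ z := ((D.E.ker _ _).1 hKuz).2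
  have hψz : D.ψ z = 0 := by rw [← hπψ, hKz, hπσ']
  have hwlz : wordImg D.ψ (letters z) = WithOne.coe (0 : WithZero G) := by
    rw [wordImg_letters, hψz]
  rcases decomp_zero D.ψ (letters z) with hall | ⟨p, a₀, q, hsplit, hp, ha₀⟩
  · exfalso
    rcases wordImg_all_ne_zero D.ψ hall with h2 | ⟨t, ht, h2⟩
    · rw [hwlz] at h2
      exact WithOne.coe_ne_one h2
    · rw [hwlz] at h2
      exact ht (WithOne.coe_inj.1 h2).symm
  have hsplit2 : letters (u * z) = (letters u ++ p) ++ a₀ :: q := by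
    rw [letters_mul, hsplit, List.append_assoc]
  have hmem : (((wordImg D.ψ (letters u ++ p), wordImg D.ψ (a₀ :: q)), a₀,
      (wordImg D.ψ ((letters u ++ p) ++ [a₀]), wordImg D.ψ q)) : KREdge D.A (WithZero G)) ∈
      pathEdges D.ψ (u * z) := ⟨letters u ++ p, q, a₀, hsplit2, rfl⟩
  have hw1img : wordImg D.ψ (letters u ++ p)
      = WithOne.coe (D.ψ u) * wordImg D.ψ p := by
    rw [wordImg_append, wordImg_letters]
  have hsrc : ∃ t : WithZero G, t ≠ 0 ∧ wordImg D.ψ (letters u ++ p) = WithOne.coe t := by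
    rcases wordImg_all_ne_zero D.ψ hp with h2 | ⟨t, ht, h2⟩
    · exact ⟨D.ψ u, by rw [hψu]; exact WithZero.coe_ne_zero,
        by rw [hw1img, h2, mul_one]⟩
    · exact ⟨D.ψ u * t, by rw [hψu]; exact mul_ne_zero WithZero.coe_ne_zero ht,
        by rw [hw1img, h2, ← WithOne.coe_mul]⟩
  have htgt : wordImg D.ψ ((letters u ++ p) ++ [a₀]) = WithOne.coe (0 : WithZero G) := by
    have h1 : wordImg D.ψ [a₀] = WithOne.coe (0 : WithZero G) := by
      rw [wordImg_cons, letterImg, ha₀]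
      exact coe_zero_mul _
    rw [wordImg_append, h1, mul_coe_zero]
  have htrans : IsTransEdge D.ψ (((wordImg D.ψ (letters u ++ p), wordImg D.ψ (a₀ :: q)), a₀,
      (wordImg D.ψ ((letters u ++ p) ++ [a₀]), wordImg D.ψ q)) : KREdge D.A (WithZero G)) := by
    refine ⟨pathEdges_isKREdge D.ψ hmem, ?_⟩
    intro hreach
    have h0 := reach_zero_fst D.ψ hreach htgt
    obtain ⟨t, ht, h2⟩ := hsrc
    rw [h2] at h0
    exact ht (WithOne.coe_inj.1 h0)
  have hin : (((wordImg D.ψ (letters u ++ p), wordImg D.ψ (a₀ :: q)), a₀,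
      (wordImg D.ψ ((letters u ++ p) ++ [a₀]), wordImg D.ψ q)) : KREdge D.A (WithZero G)) ∈
      transEdges D.ψ z := by
    rw [← hTE]
    exact ⟨hmem, htrans⟩
  obtain ⟨w₁', w₂', a', hsplit', heq⟩ := hin.1
  simp only [Prod.mk.injEq] at heq
  obtain ⟨⟨h11, -⟩, hlab, -, -⟩ := heq
  obtain ⟨t, ht, hw1t⟩ := hsrc
  have hw1' : ∀ b ∈ w₁', D.ψ (FreeSemigroup.of b) ≠ 0 := by
    intro b hb hb0
    have hzl := zero_letter_wordImg D.ψ hb hb0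
    rw [← h11, hw1t] at hzl
    exact ht (WithOne.coe_inj.1 hzl)
  have hpw : p = w₁' :=
    prefix_unique D.ψ ha₀ (hlab ▸ ha₀) p w₁' (hsplit.symm.trans hsplit') hp hw1'
  have hkey : wordImg D.ψ p = WithOne.coe (D.ψ u) * wordImg D.ψ p := by
    rw [← hw1img, h11, ← hpw]
  rcases wordImg_all_ne_zero D.ψ hp with h2 | ⟨t2, ht2, h2⟩
  · rw [h2, mul_one] at hkey
    exact absurd hkey.symm WithOne.coe_ne_one
  · rw [h2, ← WithOne.coe_mul] at hkey
    have h3 : D.ψ u * t2 = 1 * t2 := by rw [one_mul, ← WithOne.coe_inj.1 hkey]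
    have h4 : D.ψ u = 1 := mul_right_cancel₀ ht2 h3
    rw [hψu, ← WithZero.coe_one] at h4
    exact WithZero.coe_inj.1 h4

/-- `G⁰` is equidivisible and is a KR-cover iff the finite group `G` is
trivial. -/
theorem groupWithZero_equidivisible_KRCover_iff (G : Type) [Group G] [Finite G] :
    Equidivisible (WithZero G) ∧
    (IsKRCover (discTopSgr (WithZero G)) ↔ ∀ g : G, g = 1) :=
  ⟨equidiv_withZero G, trivial_of_krcover G, krcover_of_trivial G⟩
end

section
/- Let (S_i)_{i∈I} be an inverse system of profinite semigroups over an upward-directed index set I, with all connecting continuous homomorphisms onto, such that each S_i is a KR-cover. Then the inverse limit S = lim←_{i∈I} S_i is a KR-cover. -/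
set_option autoImplicit false

section InvLimAux

variable {I : Type} [Nonempty I] [Preorder I]
  (S : I → TopSgr)
  (f : ∀ i j, j ≤ i → ((S i).carrier →ₙ* (S j).carrier))

/-- The underlying set of the inverse limit is closed in the product. -/
lemma invLim_isClosed (hT2 : ∀ i, T2Space (S i).carrier)
    (hcont : ∀ i j (h : j ≤ i), Continuous ⇑(f i j h)) :
    IsClosed ((invLimSub S f : Subsemigroup (∀ i, (S i).carrier)) :
      Set (∀ i, (S i).carrier)) := by
  have hset : ((invLimSub S f : Subsemigroup (∀ i, (S i).carrier)) :
      Set (∀ i, (S i).carrier))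
      = ⋂ (i) (j) (h : j ≤ i), {x : ∀ i, (S i).carrier | f i j h (x i) = x j} := by
    ext x
    simp only [Set.mem_iInter, Set.mem_setOf_eq]
    rfl
  rw [hset]
  refine isClosed_iInter fun i => isClosed_iInter fun j => isClosed_iInter fun h => ?_
  haveI := hT2 j
  exact isClosed_eq ((hcont i j h).comp (continuous_apply i)) (continuous_apply j)

/-- Surjectivity of the canonical projections of the inverse limit. -/
lemma invLim_proj_surj
    (hdir : ∀ i j : I, ∃ k, i ≤ k ∧ j ≤ k)
    (hpro : ∀ i, IsProfiniteSgr (S i))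
    (hcont : ∀ i j (h : j ≤ i), Continuous ⇑(f i j h))
    (hsurj : ∀ i j (h : j ≤ i), Function.Surjective ⇑(f i j h))
    (hid : ∀ i (h : i ≤ i) (x : (S i).carrier), f i i h x = x)
    (hcomp : ∀ i j k (hij : j ≤ i) (hjk : k ≤ j) (x : (S i).carrier),
      f j k hjk (f i j hij x) = f i k (hjk.trans hij) x)
    (k : I) (s : (S k).carrier) :
    ∃ x ∈ invLimSub S f, x k = s := by
  classical
  haveI : ∀ i, CompactSpace (S i).carrier := fun i => (hpro i).1
  haveI : ∀ i, T2Space (S i).carrier := fun i => (hpro i).2.1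
  -- every coordinate semigroup is nonempty
  have hne : ∀ i, Nonempty (S i).carrier := by
    intro i
    obtain ⟨m, hmi, hmk⟩ := hdir i k
    obtain ⟨y, -⟩ := hsurj m k hmk s
    exact ⟨f m i hmi y⟩
  -- the directed family of closed sets
  set D : {j : I // k ≤ j} → Set (∀ i, (S i).carrier) :=
    fun j => {x | f j.1 k j.2 (x j.1) = s ∧ ∀ i (h : i ≤ j.1), f j.1 i h (x j.1) = x i}
    with hD
  haveI : Nonempty {j : I // k ≤ j} := ⟨⟨k, le_refl k⟩⟩
  have hclosed : ∀ j, IsClosed (D j) := by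
    intro j
    have h1 : IsClosed {x : ∀ i, (S i).carrier | f j.1 k j.2 (x j.1) = s} :=
      isClosed_eq ((hcont j.1 k j.2).comp (continuous_apply j.1)) continuous_const
    have h2 : IsClosed {x : ∀ i, (S i).carrier | ∀ i (h : i ≤ j.1), f j.1 i h (x j.1) = x i} := by
      have : {x : ∀ i, (S i).carrier | ∀ i (h : i ≤ j.1), f j.1 i h (x j.1) = x i}
          = ⋂ (i) (h : i ≤ j.1), {x : ∀ i', (S i').carrier | f j.1 i h (x j.1) = x i} := by
        ext x; simp only [Set.mem_iInter, Set.mem_setOf_eq]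
      rw [this]
      exact isClosed_iInter fun i => isClosed_iInter fun h =>
        isClosed_eq ((hcont j.1 i h).comp (continuous_apply j.1)) (continuous_apply i)
    exact h1.inter h2
  have hnonempty : ∀ j, (D j).Nonempty := by
    intro j
    obtain ⟨y, hy⟩ := hsurj j.1 k j.2 s
    refine ⟨fun i => if h : i ≤ j.1 then f j.1 i h y else Classical.choice (hne i), ?_, ?_⟩
    · simp only [dif_pos (le_refl j.1), hid j.1 (le_refl j.1) y, hy]
    · intro i h
      simp only [dif_pos (le_refl j.1), dif_pos h, hid j.1 (le_refl j.1) y]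
  have hdirected : Directed (· ⊇ ·) D := by
    intro j₁ j₂
    obtain ⟨m, hm1, hm2⟩ := hdir j₁.1 j₂.1
    have hkm : k ≤ m := j₁.2.trans hm1
    refine ⟨⟨m, hkm⟩, ?_, ?_⟩
    · intro x hx
      have hx1 : f m j₁.1 hm1 (x m) = x j₁.1 := hx.2 j₁.1 hm1
      constructor
      · rw [← hx1, hcomp m j₁.1 k hm1 j₁.2 (x m)]
        exact hx.1
      · intro i h
        rw [← hx1, hcomp m j₁.1 i hm1 h (x m)]
        exact hx.2 i (h.trans hm1)
    · intro x hx
      have hx2 : f m j₂.1 hm2 (x m) = x j₂.1 := hx.2 j₂.1 hm2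
      constructor
      · rw [← hx2, hcomp m j₂.1 k hm2 j₂.2 (x m)]
        exact hx.1
      · intro i h
        rw [← hx2, hcomp m j₂.1 i hm2 h (x m)]
        exact hx.2 i (h.trans hm2)
  obtain ⟨x, hx⟩ := IsCompact.nonempty_iInter_of_directed_nonempty_isCompact_isClosed
    D hdirected hnonempty (fun j => (hclosed j).isCompact) hclosed
  simp only [Set.mem_iInter] at hx
  refine ⟨x, ?_, ?_⟩
  · intro i i' h
    obtain ⟨m, hmi, hmk⟩ := hdir i k
    have hm := hx ⟨m, hmk⟩
    have h1 : f m i hmi (x m) = x i := hm.2 i hmi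
    have h2 : f m i' (h.trans hmi) (x m) = x i' := hm.2 i' (h.trans hmi)
    rw [← h1, hcomp m i i' hmi h (x m), h2]
  · have hm := hx ⟨k, le_refl k⟩
    have := hm.1
    rwa [hid k (le_refl k) (x k)] at this

/-- A continuous homomorphism from the inverse limit to a discrete semigroup factors
through one of the coordinates. -/
lemma invLim_factor
    (hdir : ∀ i j : I, ∃ k, i ≤ k ∧ j ≤ k)
    (hpro : ∀ i, IsProfiniteSgr (S i))
    (hcont : ∀ i j (h : j ≤ i), Continuous ⇑(f i j h))
    (T : Type) [Semigroup T]
    (φ : (invLimTopSgr S f).carrier →ₙ* T) (hφ : ContinuousDisc ⇑φ) :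
    ∃ k : I, ∀ x y : (invLimTopSgr S f).carrier,
      x.1 k = y.1 k → φ x = φ y := by
  classical
  letI : TopologicalSpace T := ⊥
  haveI : DiscreteTopology T := ⟨rfl⟩
  haveI : ∀ i, CompactSpace (S i).carrier := fun i => (hpro i).1
  haveI : ∀ i, T2Space (S i).carrier := fun i => (hpro i).2.1
  haveI : IsDirected I (· ≤ ·) := ⟨hdir⟩
  haveI : CompactSpace (invLimTopSgr S f).carrier :=
    isCompact_iff_compactSpace.mp
      ((invLim_isClosed S f (fun i => (hpro i).2.1) hcont).isCompact)
  -- For each point, find a basic open neighborhood on which φ is constant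
  have key : ∀ x : (invLimTopSgr S f).carrier,
      ∃ (F : Finset I) (u : ∀ i, Set (S i).carrier),
        (∀ i ∈ F, IsOpen (u i) ∧ x.1 i ∈ u i) ∧
        ∀ y : (invLimTopSgr S f).carrier,
          (∀ i ∈ F, y.1 i ∈ u i) → φ y = φ x := by
    intro x
    have hopen : IsOpen (⇑φ ⁻¹' {φ x}) :=
      hφ.isOpen_preimage _ (isOpen_discrete _)
    obtain ⟨W, hW, hWeq⟩ := (isOpen_induced_iff
      (f := (Subtype.val : (invLimTopSgr S f).carrier → ∀ i, (S i).carrier))).mp hopen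
    have hxW : x.1 ∈ W := by
      have : x ∈ ⇑φ ⁻¹' {φ x} := rfl
      rw [← hWeq] at this
      exact this
    obtain ⟨F, u, hu, hsub⟩ := isOpen_pi_iff.mp hW _ hxW
    refine ⟨F, u, hu, fun y hy => ?_⟩
    have hyW : y.1 ∈ W := hsub fun i hi => hy i hi
    have : y ∈ ⇑φ ⁻¹' {φ x} := by rw [← hWeq]; exact hyW
    exact this
  choose F u hu hconst using key
  -- open cover by these neighborhoods
  set V : (invLimTopSgr S f).carrier → Set (invLimTopSgr S f).carrier :=
    fun x => {y | ∀ i ∈ F x, y.1 i ∈ u x i} with hV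
  have hVopen : ∀ x, IsOpen (V x) := by
    intro x
    have : V x = Subtype.val ⁻¹' ((F x : Set I).pi (u x)) := by
      ext y
      simp only [hV, Set.mem_setOf_eq, Set.mem_preimage, Set.mem_pi, Finset.mem_coe]
      exact Iff.rfl
    rw [this]
    exact (isOpen_set_pi (F x).finite_toSet
      (fun i hi => (hu x i hi).1)).preimage continuous_subtype_val
  have hVmem : ∀ x, x ∈ V x := fun x i hi => (hu x i hi).2
  obtain ⟨t, ht⟩ := IsCompact.elim_finite_subcover isCompact_univ V hVopen
    (fun x _ => Set.mem_iUnion.mpr ⟨x, hVmem x⟩)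
  -- pick an upper bound of all coordinates involved
  obtain ⟨k, hk⟩ := Finset.exists_le (t.biUnion F)
  refine ⟨k, fun x y hxy => ?_⟩
  obtain ⟨x₀, hx₀t, hxV⟩ := Set.mem_iUnion₂.mp (ht (Set.mem_univ x))
  have hyV : y ∈ V x₀ := by
    intro i hi
    have hik : i ≤ k := hk i (Finset.mem_biUnion.mpr ⟨x₀, hx₀t, hi⟩)
    have hxi : f k i hik (x.1 k) = x.1 i :=
      x.2 k i hik
    have hyi : f k i hik (y.1 k) = y.1 i :=
      y.2 k i hik
    have : y.1 i = x.1 i := by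
      rw [← hxi, ← hyi, hxy]
    rw [this]
    exact hxV i hi
  rw [hconst x₀ x hxV, hconst x₀ y hyV]

end InvLimAux

/-- An inverse quotient limit of KR-covers over a directed index set is a
KR-cover. -/
theorem invLim_isKRCover {I : Type} [Nonempty I] [Preorder I]
    (hdir : ∀ i j : I, ∃ k, i ≤ k ∧ j ≤ k)
    (S : I → TopSgr) (hpro : ∀ i, IsProfiniteSgr (S i)) (hcov : ∀ i, IsKRCover (S i))
    (f : ∀ i j, j ≤ i → ((S i).carrier →ₙ* (S j).carrier))
    (hcont : ∀ i j (h : j ≤ i), Continuous ⇑(f i j h))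
    (hsurj : ∀ i j (h : j ≤ i), Function.Surjective ⇑(f i j h))
    (hid : ∀ i (h : i ≤ i) (x : (S i).carrier), f i i h x = x)
    (hcomp : ∀ i j k (hij : j ≤ i) (hjk : k ≤ j) (x : (S i).carrier),
      f j k hjk (f i j hij x) = f i k (hjk.trans hij) x) :
    IsKRCover (invLimTopSgr S f) := by
  classical
  haveI : ∀ i, CompactSpace (S i).carrier := fun i => (hpro i).1
  haveI : ∀ i, T2Space (S i).carrier := fun i => (hpro i).2.1
  haveI : CompactSpace (invLimTopSgr S f).carrier :=
    isCompact_iff_compactSpace.mp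
      ((invLim_isClosed S f (fun i => (hpro i).2.1) hcont).isCompact)
  intro T _ _ hex
  refine ⟨hex, ?_⟩
  intro φ hφcont hφsurj
  -- φ factors through some coordinate k
  obtain ⟨k, hk⟩ := invLim_factor S f hdir hpro hcont T φ hφcont
  -- the projection onto coordinate k, as a continuous homomorphism
  set p : (invLimTopSgr S f).carrier →ₙ* (S k).carrier :=
    ⟨fun x => x.1 k, fun x y => rfl⟩ with hp
  have hpcont : Continuous ⇑p := (continuous_apply k).comp continuous_subtype_val
  have hpsurj : Function.Surjective ⇑p := by
    intro s
    obtain ⟨x, hx, hxk⟩ := invLim_proj_surj S f hdir hpro hcont hsurj hid hcomp k s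
    exact ⟨⟨x, hx⟩, hxk⟩
  -- a section for p
  have hsec : ∀ s : (S k).carrier, ∃ x : (invLimTopSgr S f).carrier,
      x.1 k = s := fun s => hpsurj s
  choose sec hsecspec using hsec
  -- the induced homomorphism on the coordinate
  set φk : (S k).carrier →ₙ* T :=
    ⟨fun s => φ (sec s), by
      intro s₁ s₂
      show φ (sec (s₁ * s₂)) = φ (sec s₁) * φ (sec s₂)
      rw [← map_mul]
      apply hk
      have h2 : (sec s₁ * sec s₂).1 k =
          (sec s₁).1 k * (sec s₂).1 k := rfl
      rw [hsecspec (s₁ * s₂), h2, hsecspec s₁, hsecspec s₂]⟩ with hφk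
  have hfactor : ∀ x : (invLimTopSgr S f).carrier, φk (p x) = φ x := by
    intro x
    apply hk
    rw [hsecspec]
    rfl
  -- φk is continuous (discrete codomain)
  have hφkcont : ContinuousDisc ⇑φk := by
    letI : TopologicalSpace T := ⊥
    haveI : DiscreteTopology T := ⟨rfl⟩
    have hq : Topology.IsQuotientMap ⇑p :=
      IsClosedMap.isQuotientMap (hpcont.isClosedMap) hpcont hpsurj
    show Continuous ⇑φk
    rw [hq.continuous_iff]
    have : ⇑φk ∘ ⇑p = ⇑φ := funext hfactor
    rw [this]
    exact hφcont
  have hφksurj : Function.Surjective ⇑φk := by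
    intro u
    obtain ⟨x, hx⟩ := hφsurj u
    exact ⟨p x, by rw [hfactor, hx]⟩
  -- use that S k is a KR-cover
  obtain ⟨-, hKR⟩ := hcov k T ⟨φk, hφkcont, hφksurj⟩
  obtain ⟨D, φψ, hφψcont, hφψ⟩ := hKR φk hφkcont hφksurj
  refine ⟨D, φψ.comp p, ?_, ?_⟩
  · letI : TopologicalSpace D.E.K := ⊥
    exact hφψcont.comp hpcont
  · ext x
    show D.E.π (φψ (p x)) = φ x
    rw [← hfactor x]
    exact congrFun (congrArg (fun g : _ →ₙ* T => ⇑g) hφψ) (p x)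
end
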